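/- Let N ∈ ℕ with N ≥ 1 and α > 0. There exists a constant C > 0, depending only on N, α, and m_{2+α} := max{∑_{n≥0} n^{2+α} f_n, ∑_{n≥0} n^{2+α} g_n}, such that for all probability distributions f and g on ℕ with the same mean value and with supp(f) ∪ supp(g) ⊆ {0, 1, ..., N}, one has W_2(f,g)^2 ≤ C · D_2(f,g)^{α/(1+α)}. -/

import Mathlib

open scoped ENNReal

noncomputable section

/-- `f` is a probability distribution on `ℕ`. -/
def IsProbN (f : ℕ → ℝ) : Prop := (∀ n, 0 ≤ f n) ∧ HasSum f 1

/-- `π` is a coupling of the probability distributions `f` and `g` on `ℕ`. -/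
def IsCouplingN (π : ℕ → ℕ → ℝ) (f g : ℕ → ℝ) : Prop :=
  (∀ i j, 0 ≤ π i j) ∧ (∀ i, HasSum (fun j => π i j) (f i)) ∧
    (∀ j, HasSum (fun i => π i j) (g j))

/-- The Wasserstein distance of order `p` between probability distributions on `ℕ`. -/
def WassersteinN (p : ℝ) (f g : ℕ → ℝ) : ℝ≥0∞ :=
  (⨅ π : {π : ℕ → ℕ → ℝ // IsCouplingN π f g},
    ∑' (i : ℕ) (j : ℕ), ENNReal.ofReal (π.1 i j) * ENNReal.ofReal (|(i : ℝ) - (j : ℝ)| ^ p)) ^ (1 / p)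

/-- The probability generating function of `f`. -/
def pgfN (f : ℕ → ℝ) (z : ℝ) : ℝ := ∑' n : ℕ, z ^ n * f n

/-- The Toscani (Fourier-based) distance of order `s` between probability
distributions on `ℕ`. -/
def ToscaniN (s : ℝ) (f g : ℕ → ℝ) : ℝ≥0∞ :=
  ⨆ z : Set.Ioo (0 : ℝ) 1, ENNReal.ofReal (|pgfN f z - pgfN g z| / (1 - (z : ℝ)) ^ s)


open Finset

lemma sum_range_eq_one (N : ℕ) (f : ℕ → ℝ) (hf : IsProbN f)
    (hfN : ∀ n, N < n → f n = 0) : ∑ n ∈ range (N + 1), f n = 1 := by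
  have h1 : HasSum f (∑ n ∈ range (N + 1), f n) :=
    hasSum_sum_of_ne_finset_zero (by
      intro b hb
      exact hfN b (by simp only [Finset.mem_range] at hb; omega))
  exact h1.unique hf.2

lemma coupling_bound (N : ℕ) (f g : ℕ → ℝ) (hf : IsProbN f) (hg : IsProbN g)
    (hfN : ∀ n, N < n → f n = 0) (hgN : ∀ n, N < n → g n = 0) :
    WassersteinN 2 f g ^ 2 ≤
      ENNReal.ofReal ((N : ℝ) ^ 2 * ∑ n ∈ range (N + 1), |f n - g n|) := by
  classical
  set u : ℕ → ℝ := fun n => f n - min (f n) (g n) with hu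
  set v : ℕ → ℝ := fun n => g n - min (f n) (g n) with hv
  set ε : ℝ := ∑ n ∈ range (N + 1), u n with hε
  set π : ℕ → ℕ → ℝ :=
    fun i j => (if i = j then min (f i) (g i) else 0) + u i * v j / ε with hπ
  have hu0 : ∀ n, 0 ≤ u n := fun n => sub_nonneg.2 (min_le_left _ _)
  have hv0 : ∀ n, 0 ≤ v n := fun n => sub_nonneg.2 (min_le_right _ _)
  have humem : ∀ n, N < n → u n = 0 := fun n hn => by
    simp [hu, hfN n hn, hgN n hn]
  have hvmem : ∀ n, N < n → v n = 0 := fun n hn => by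
    simp [hv, hfN n hn, hgN n hn]
  have hε0 : 0 ≤ ε := Finset.sum_nonneg fun n _ => hu0 n
  have hsumf := sum_range_eq_one N f hf hfN
  have hsumg := sum_range_eq_one N g hg hgN
  have hsumv : ∑ n ∈ range (N + 1), v n = ε := by
    rw [hε]
    simp only [hu, hv]
    rw [Finset.sum_sub_distrib, Finset.sum_sub_distrib, hsumf, hsumg]
  have huε : ∀ i, u i ≤ ε := by
    intro i
    rcases le_or_gt i N with h | h
    · exact Finset.single_le_sum (fun n _ => hu0 n) (Finset.mem_range.mpr (by omega))
    · rw [humem i h]; exact hε0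
  have hvε : ∀ j, v j ≤ ε := by
    intro j
    rcases le_or_gt j N with h | h
    · rw [← hsumv]
      exact Finset.single_le_sum (fun n _ => hv0 n) (Finset.mem_range.mpr (by omega))
    · rw [hvmem j h]; exact hε0
  have hkeyu : ∀ i, u i * ε / ε = u i := by
    intro i
    by_cases h : ε = 0
    · have : u i = 0 := le_antisymm (h ▸ huε i) (hu0 i)
      simp [h, this]
    · rw [mul_div_assoc, div_self h, mul_one]
  have hkeyv : ∀ j, ε * v j / ε = v j := by
    intro j
    by_cases h : ε = 0
    · have : v j = 0 := le_antisymm (h ▸ hvε j) (hv0 j)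
      simp [h, this]
    · rw [mul_comm, mul_div_assoc, div_self h, mul_one]
  have hπ0 : ∀ i j, 0 ≤ π i j := by
    intro i j
    apply add_nonneg
    · split_ifs with h
      · exact le_min (hf.1 i) (hg.1 i)
      · exact le_refl 0
    · exact div_nonneg (mul_nonneg (hu0 i) (hv0 j)) hε0
  have hπzero_j : ∀ i j, N < j → π i j = 0 := by
    intro i j hj
    simp only [hπ, hvmem j hj, mul_zero, zero_div, add_zero]
    split_ifs with h
    · rw [h, hfN j hj, hgN j hj]; simp
    · rfl
  have hπzero_i : ∀ i j, N < i → π i j = 0 := by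
    intro i j hi
    simp only [hπ, humem i hi, zero_mul, zero_div, add_zero]
    split_ifs with h
    · rw [hfN i hi, hgN i hi]; simp
    · rfl
  have hrowsum : ∀ i, ∑ j ∈ range (N + 1), π i j = f i := by
    intro i
    simp only [hπ]
    rw [Finset.sum_add_distrib]
    have h1 : ∑ j ∈ range (N + 1), (if i = j then min (f i) (g i) else 0)
        = min (f i) (g i) := by
      rw [Finset.sum_ite_eq (range (N + 1)) i (fun _ => min (f i) (g i))]
      by_cases hi : i ∈ range (N + 1)
      · rw [if_pos hi]
      · rw [if_neg hi]
        have hNi : N < i := by simp only [Finset.mem_range] at hi; omega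
        rw [hfN i hNi, hgN i hNi]; simp
    have h2 : ∑ j ∈ range (N + 1), u i * v j / ε = u i := by
      rw [← Finset.sum_div, ← Finset.mul_sum, hsumv, hkeyu]
    rw [h1, h2]
    simp [hu]
  have hcolsum : ∀ j, ∑ i ∈ range (N + 1), π i j = g j := by
    intro j
    simp only [hπ]
    rw [Finset.sum_add_distrib]
    have h1 : ∑ i ∈ range (N + 1), (if i = j then min (f i) (g i) else 0)
        = min (f j) (g j) := by
      rw [Finset.sum_ite_eq' (range (N + 1)) j (fun i => min (f i) (g i))]
      by_cases hj : j ∈ range (N + 1)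
      · rw [if_pos hj]
      · rw [if_neg hj]
        have hNj : N < j := by simp only [Finset.mem_range] at hj; omega
        rw [hfN j hNj, hgN j hNj]; simp
    have h2 : ∑ i ∈ range (N + 1), u i * v j / ε = v j := by
      rw [← Finset.sum_div, ← Finset.sum_mul, ← hε, hkeyv]
    rw [h1, h2]
    simp [hv]
  have hrow : ∀ i, HasSum (fun j => π i j) (f i) := by
    intro i
    have h1 : HasSum (fun j => π i j) (∑ j ∈ range (N + 1), π i j) :=
      hasSum_sum_of_ne_finset_zero (fun j hj =>
        hπzero_j i j (by simp only [Finset.mem_range] at hj; omega))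
    rwa [hrowsum i] at h1
  have hcol : ∀ j, HasSum (fun i => π i j) (g j) := by
    intro j
    have h1 : HasSum (fun i => π i j) (∑ i ∈ range (N + 1), π i j) :=
      hasSum_sum_of_ne_finset_zero (fun i hi =>
        hπzero_i i j (by simp only [Finset.mem_range] at hi; omega))
    rwa [hcolsum j] at h1
  have hcpl : IsCouplingN π f g := ⟨hπ0, hrow, hcol⟩
  -- W² equals the infimum
  have hWsq : WassersteinN 2 f g ^ 2 =
      ⨅ π : {π : ℕ → ℕ → ℝ // IsCouplingN π f g},
        ∑' (i : ℕ) (j : ℕ), ENNReal.ofReal (π.1 i j) *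
          ENNReal.ofReal (|(i : ℝ) - (j : ℝ)| ^ (2 : ℝ)) := by
    rw [WassersteinN]
    rw [← ENNReal.rpow_natCast _ 2, ← ENNReal.rpow_mul]
    norm_num
  rw [hWsq]
  refine le_trans (iInf_le _ ⟨π, hcpl⟩) ?_
  -- compute the cost of π
  have houter : ∑' (i : ℕ) (j : ℕ), ENNReal.ofReal (π i j) *
      ENNReal.ofReal (|(i : ℝ) - (j : ℝ)| ^ (2 : ℝ))
      = ∑ i ∈ range (N + 1), ∑ j ∈ range (N + 1), ENNReal.ofReal (π i j) *
        ENNReal.ofReal (|(i : ℝ) - (j : ℝ)| ^ (2 : ℝ)) := by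
    rw [tsum_eq_sum (s := range (N + 1)) ?_]
    · refine Finset.sum_congr rfl fun i _ => ?_
      refine tsum_eq_sum fun j hj => ?_
      rw [hπzero_j i j (by simp only [Finset.mem_range] at hj; omega)]
      simp
    · intro i hi
      have h0 : ∀ j, π i j = 0 := fun j =>
        hπzero_i i j (by simp only [Finset.mem_range] at hi; omega)
      simp [h0]
  rw [houter]
  have hterm : ∀ i ∈ range (N + 1), ∀ j ∈ range (N + 1),
      ENNReal.ofReal (π i j) * ENNReal.ofReal (|(i : ℝ) - (j : ℝ)| ^ (2 : ℝ))
        ≤ ENNReal.ofReal (u i * v j / ε * (N : ℝ) ^ 2) := by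
    intro i hi j hj
    by_cases hij : i = j
    · subst hij
      have hzero : ENNReal.ofReal (|(i : ℝ) - (i : ℝ)| ^ (2 : ℝ)) = 0 := by
        rw [sub_self, abs_zero, Real.zero_rpow (by norm_num : (2:ℝ) ≠ 0)]
        simp
      rw [hzero, mul_zero]
      exact zero_le
    · have h1 : π i j = u i * v j / ε := by simp [hπ, hij]
      have hiN : (i : ℝ) ≤ (N : ℝ) := by
        exact_mod_cast Nat.lt_succ_iff.mp (Finset.mem_range.mp hi)
      have hjN : (j : ℝ) ≤ (N : ℝ) := by
        exact_mod_cast Nat.lt_succ_iff.mp (Finset.mem_range.mp hj)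
      have habs : |(i : ℝ) - (j : ℝ)| ≤ (N : ℝ) := by
        rw [abs_sub_le_iff]
        constructor
        · have : (0:ℝ) ≤ (j:ℝ) := Nat.cast_nonneg j
          linarith
        · have : (0:ℝ) ≤ (i:ℝ) := Nat.cast_nonneg i
          linarith
      have h2 : ENNReal.ofReal (|(i : ℝ) - (j : ℝ)| ^ (2 : ℝ))
          ≤ ENNReal.ofReal ((N : ℝ) ^ 2) := by
        apply ENNReal.ofReal_le_ofReal
        calc |(i : ℝ) - (j : ℝ)| ^ (2 : ℝ) ≤ (N : ℝ) ^ (2 : ℝ) :=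
              Real.rpow_le_rpow (abs_nonneg _) habs (by norm_num)
          _ = (N : ℝ) ^ 2 := by
              rw [show ((2:ℝ)) = ((2:ℕ):ℝ) by norm_num, Real.rpow_natCast]
      rw [h1]
      calc ENNReal.ofReal (u i * v j / ε) * ENNReal.ofReal (|(i : ℝ) - (j : ℝ)| ^ (2 : ℝ))
          ≤ ENNReal.ofReal (u i * v j / ε) * ENNReal.ofReal ((N : ℝ) ^ 2) :=
            mul_le_mul_right h2 _
        _ = ENNReal.ofReal (u i * v j / ε * (N : ℝ) ^ 2) :=
            (ENNReal.ofReal_mul (div_nonneg (mul_nonneg (hu0 i) (hv0 j)) hε0)).symm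
  have hrealsum : ∑ i ∈ range (N + 1), ∑ j ∈ range (N + 1),
      u i * v j / ε * (N : ℝ) ^ 2 ≤ (N : ℝ) ^ 2 * ∑ n ∈ range (N + 1), |f n - g n| := by
    have hinner : ∀ i, ∑ j ∈ range (N + 1), u i * v j / ε * (N : ℝ) ^ 2
        = u i * (N : ℝ) ^ 2 := by
      intro i
      calc ∑ j ∈ range (N + 1), u i * v j / ε * (N : ℝ) ^ 2
          = ∑ j ∈ range (N + 1), (u i / ε * (N : ℝ) ^ 2) * v j :=
            Finset.sum_congr rfl fun j _ => by ring
        _ = (u i / ε * (N : ℝ) ^ 2) * ∑ j ∈ range (N + 1), v j :=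
            (Finset.mul_sum _ _ _).symm
        _ = (u i * ε / ε) * (N : ℝ) ^ 2 := by rw [hsumv]; ring
        _ = u i * (N : ℝ) ^ 2 := by rw [hkeyu]
    have hεle : ε ≤ ∑ n ∈ range (N + 1), |f n - g n| := by
      rw [hε]
      refine Finset.sum_le_sum fun n _ => ?_
      show f n - min (f n) (g n) ≤ |f n - g n|
      rcases le_total (f n) (g n) with h | h
      · rw [min_eq_left h]
        simp [abs_nonneg]
      · rw [min_eq_right h]
        exact le_abs_self _
    calc ∑ i ∈ range (N + 1), ∑ j ∈ range (N + 1), u i * v j / ε * (N : ℝ) ^ 2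
        = ∑ i ∈ range (N + 1), u i * (N : ℝ) ^ 2 :=
          Finset.sum_congr rfl fun i _ => hinner i
      _ = ε * (N : ℝ) ^ 2 := by rw [← Finset.sum_mul, ← hε]
      _ ≤ (N : ℝ) ^ 2 * ∑ n ∈ range (N + 1), |f n - g n| := by
          rw [mul_comm]
          exact mul_le_mul_of_nonneg_left hεle (sq_nonneg _)
  calc ∑ i ∈ range (N + 1), ∑ j ∈ range (N + 1), ENNReal.ofReal (π i j) *
        ENNReal.ofReal (|(i : ℝ) - (j : ℝ)| ^ (2 : ℝ))
      ≤ ∑ i ∈ range (N + 1), ∑ j ∈ range (N + 1),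
          ENNReal.ofReal (u i * v j / ε * (N : ℝ) ^ 2) :=
        Finset.sum_le_sum fun i hi => Finset.sum_le_sum (hterm i hi)
    _ = ENNReal.ofReal (∑ i ∈ range (N + 1), ∑ j ∈ range (N + 1),
          u i * v j / ε * (N : ℝ) ^ 2) := by
        rw [ENNReal.ofReal_sum_of_nonneg (fun i _ => Finset.sum_nonneg fun j _ =>
          mul_nonneg (div_nonneg (mul_nonneg (hu0 i) (hv0 j)) hε0) (sq_nonneg _))]
        exact Finset.sum_congr rfl fun i _ =>
          (ENNReal.ofReal_sum_of_nonneg (fun j _ =>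
            mul_nonneg (div_nonneg (mul_nonneg (hu0 i) (hv0 j)) hε0) (sq_nonneg _))).symm
    _ ≤ ENNReal.ofReal ((N : ℝ) ^ 2 * ∑ n ∈ range (N + 1), |f n - g n|) :=
        ENNReal.ofReal_le_ofReal hrealsum


/-- For `N ≥ 1` and `α > 0`, there is a constant `C > 0` depending only
on `N`, `α` and `m_{2+α} = max{∑ n^{2+α} fₙ, ∑ n^{2+α} gₙ}` such that for all probability
distributions `f, g` on `ℕ` with the same mean value and support contained in
`{0, 1, …, N}`, one has `W₂(f,g)² ≤ C · D₂(f,g)^{α/(1+α)}`. -/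
theorem wasserstein_two_sq_le_toscani_two (N : ℕ) (hN : 1 ≤ N) (α : ℝ) (hα : 0 < α) (m : ℝ) :
    ∃ C > (0 : ℝ), ∀ f g : ℕ → ℝ, IsProbN f → IsProbN g →
      (∀ n : ℕ, N < n → f n = 0) → (∀ n : ℕ, N < n → g n = 0) →
      (∑' n : ℕ, (n : ℝ) * f n = ∑' n : ℕ, (n : ℝ) * g n) →
      max (∑' n : ℕ, (n : ℝ) ^ (2 + α) * f n) (∑' n : ℕ, (n : ℝ) ^ (2 + α) * g n) = m →
      WassersteinN 2 f g ^ 2 ≤ ENNReal.ofReal C * ToscaniN 2 f g ^ (α / (1 + α)) := by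
  classical
  -- interpolation points in (0, 1)
  set x : Fin (N + 1) → ℝ := fun k => 1 / 4 + (k : ℝ) / (4 * (N + 1)) with hx
  have hNpos : (0 : ℝ) < 4 * ((N : ℝ) + 1) := by positivity
  have hxmem : ∀ k, x k ∈ Set.Ioo (0 : ℝ) 1 := by
    intro k
    have hk0 : (0 : ℝ) ≤ (k : ℝ) := Nat.cast_nonneg _
    have hk1 : (k : ℝ) < (N : ℝ) + 1 := by
      exact_mod_cast k.2
    constructor
    · have : (0 : ℝ) ≤ (k : ℝ) / (4 * ((N : ℝ) + 1)) := by positivity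
      simp only [hx]
      push_cast
      nlinarith
    · simp only [hx]
      push_cast
      have h4 : (k : ℝ) / (4 * ((N : ℝ) + 1)) < 1 / 4 := by
        rw [div_lt_iff₀ hNpos]
        nlinarith
      linarith
  have hxinj : Function.Injective x := by
    intro a b hab
    simp only [hx] at hab
    have : (a : ℝ) / (4 * ((N : ℝ) + 1)) = (b : ℝ) / (4 * ((N : ℝ) + 1)) := by
      push_cast at hab ⊢; linarith
    have hval : (a : ℝ) = (b : ℝ) := by
      field_simp at this
      exact_mod_cast this
    have : (a : ℕ) = (b : ℕ) := by exact_mod_cast hval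
    exact Fin.ext this
  set V : Matrix (Fin (N + 1)) (Fin (N + 1)) ℝ := Matrix.vandermonde x with hV
  have hdet : IsUnit V.det :=
    (Matrix.det_vandermonde_ne_zero_iff.mpr hxinj).isUnit
  set c : ℝ := ∑ n : Fin (N + 1), ∑ k : Fin (N + 1), |V⁻¹ n k| with hc
  have hc0 : 0 ≤ c := Finset.sum_nonneg fun n _ => Finset.sum_nonneg fun k _ => abs_nonneg _
  set K : ℝ := (N : ℝ) ^ 2 * c * ((N : ℝ) + 1) with hK
  have hK0 : 0 ≤ K := mul_nonneg (mul_nonneg (sq_nonneg _) hc0) (by positivity)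
  refine ⟨K + 2 * (N : ℝ) ^ 2 + 1, by positivity, ?_⟩
  intro f g hf hg hfN hgN _ _
  set T := ToscaniN 2 f g with hT
  set d : ℕ → ℝ := fun n => f n - g n with hd
  -- pgf difference as a finite sum
  have hpgf : ∀ z : ℝ, pgfN f z - pgfN g z = ∑ n ∈ range (N + 1), z ^ n * d n := by
    intro z
    have h1 : pgfN f z = ∑ n ∈ range (N + 1), z ^ n * f n :=
      tsum_eq_sum fun n hn => by
        rw [hfN n (by simp only [Finset.mem_range] at hn; omega), mul_zero]
    have h2 : pgfN g z = ∑ n ∈ range (N + 1), z ^ n * g n :=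
      tsum_eq_sum fun n hn => by
        rw [hgN n (by simp only [Finset.mem_range] at hn; omega), mul_zero]
    rw [h1, h2, ← Finset.sum_sub_distrib]
    exact Finset.sum_congr rfl fun n _ => by show _ = z ^ n * (f n - g n); ring
  -- Toscani lower bound at each interpolation point
  have hTk : ∀ k : Fin (N + 1),
      ENNReal.ofReal |∑ n ∈ range (N + 1), (x k) ^ n * d n| ≤ T := by
    intro k
    obtain ⟨hz0, hz1⟩ := hxmem k
    have h1 : ENNReal.ofReal (|pgfN f (x k) - pgfN g (x k)| / (1 - x k) ^ (2 : ℝ)) ≤ T := by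
      rw [hT, ToscaniN]
      exact le_iSup (fun z : Set.Ioo (0 : ℝ) 1 =>
        ENNReal.ofReal (|pgfN f z - pgfN g z| / (1 - (z : ℝ)) ^ (2 : ℝ))) ⟨x k, hxmem k⟩
    refine le_trans ?_ h1
    apply ENNReal.ofReal_le_ofReal
    rw [hpgf]
    have h2 : (0 : ℝ) < (1 - x k) ^ (2 : ℝ) := Real.rpow_pos_of_pos (by linarith) _
    have h3 : (1 - x k) ^ (2 : ℝ) ≤ 1 :=
      Real.rpow_le_one (by linarith) (by linarith) (by norm_num)
    rw [le_div_iff₀ h2]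
    exact mul_le_of_le_one_right (abs_nonneg _) h3
  -- Vandermonde inversion
  set dv : Fin (N + 1) → ℝ := fun n => d n with hdv
  set w : Fin (N + 1) → ℝ := V.mulVec dv with hw
  have hwk : ∀ k, w k = ∑ n ∈ range (N + 1), (x k) ^ n * d n := by
    intro k
    rw [hw]
    show ∑ j : Fin (N + 1), V k j * dv j = _
    rw [← Fin.sum_univ_eq_sum_range (fun n => (x k) ^ n * d n) (N + 1)]
    exact Finset.sum_congr rfl fun j _ => rfl
  have hrecover : dv = V⁻¹.mulVec w := by
    rw [hw, Matrix.mulVec_mulVec, Matrix.nonsing_inv_mul V hdet, Matrix.one_mulVec]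
  set Sw : ℝ := ∑ k : Fin (N + 1), |w k| with hSw
  have hSw0 : 0 ≤ Sw := Finset.sum_nonneg fun k _ => abs_nonneg _
  have hdnorm : ∑ n ∈ range (N + 1), |d n| ≤ c * Sw := by
    rw [← Fin.sum_univ_eq_sum_range (fun n => |d n|) (N + 1)]
    calc ∑ n : Fin (N + 1), |d (n : ℕ)|
        = ∑ n : Fin (N + 1), |dv n| := rfl
      _ ≤ ∑ n : Fin (N + 1), ∑ k : Fin (N + 1), |V⁻¹ n k| * |w k| := by
          refine Finset.sum_le_sum fun n _ => ?_
          rw [show dv n = ∑ k : Fin (N + 1), V⁻¹ n k * w k from congrFun hrecover n]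
          refine le_trans (Finset.abs_sum_le_sum_abs _ _) (le_of_eq ?_)
          exact Finset.sum_congr rfl fun k _ => abs_mul _ _
      _ ≤ ∑ n : Fin (N + 1), ∑ k : Fin (N + 1), |V⁻¹ n k| * Sw := by
          refine Finset.sum_le_sum fun n _ => Finset.sum_le_sum fun k _ => ?_
          exact mul_le_mul_of_nonneg_left
            (Finset.single_le_sum (fun k' _ => abs_nonneg (w k')) (Finset.mem_univ k))
            (abs_nonneg _)
      _ = c * Sw := by rw [hc, Finset.sum_mul]; exact Finset.sum_congr rfl fun n _ =>
            (Finset.sum_mul _ _ _).symm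
  -- bound the Wasserstein cost
  have hWbase := coupling_bound N f g hf hg hfN hgN
  have hdle2 : ∑ n ∈ range (N + 1), |d n| ≤ 2 := by
    have h1 : ∀ n ∈ range (N + 1), |d n| ≤ f n + g n := by
      intro n _
      show |f n - g n| ≤ f n + g n
      rw [abs_sub_le_iff]
      constructor
      · linarith [hg.1 n]
      · linarith [hf.1 n]
    calc ∑ n ∈ range (N + 1), |d n| ≤ ∑ n ∈ range (N + 1), (f n + g n) :=
          Finset.sum_le_sum h1
      _ = 2 := by
          rw [Finset.sum_add_distrib, sum_range_eq_one N f hf hfN,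
            sum_range_eq_one N g hg hgN]
          norm_num
  have hW2 : WassersteinN 2 f g ^ 2 ≤ ENNReal.ofReal (2 * (N : ℝ) ^ 2) := by
    refine hWbase.trans (ENNReal.ofReal_le_ofReal ?_)
    calc (N : ℝ) ^ 2 * ∑ n ∈ range (N + 1), |d n| ≤ (N : ℝ) ^ 2 * 2 :=
          mul_le_mul_of_nonneg_left hdle2 (sq_nonneg _)
      _ = 2 * (N : ℝ) ^ 2 := by ring
  have hSwT : ENNReal.ofReal Sw ≤ ((N : ℝ≥0∞) + 1) * T := by
    rw [hSw, ENNReal.ofReal_sum_of_nonneg (fun k _ => abs_nonneg _)]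
    calc ∑ k : Fin (N + 1), ENNReal.ofReal |w k|
        ≤ ∑ _k : Fin (N + 1), T := by
          refine Finset.sum_le_sum fun k _ => ?_
          rw [hwk k]
          exact hTk k
      _ = ((N : ℝ≥0∞) + 1) * T := by
          rw [Finset.sum_const, Finset.card_univ, Fintype.card_fin, nsmul_eq_mul]
          push_cast
          ring
  have hKT : WassersteinN 2 f g ^ 2 ≤ ENNReal.ofReal K * T := by
    refine le_trans (hWbase.trans (ENNReal.ofReal_le_ofReal
      (mul_le_mul_of_nonneg_left hdnorm (sq_nonneg (N : ℝ))))) ?_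
    have h1 : (N : ℝ) ^ 2 * (c * Sw) = (N : ℝ) ^ 2 * c * Sw := by ring
    rw [h1, ENNReal.ofReal_mul (mul_nonneg (sq_nonneg _) hc0)]
    calc ENNReal.ofReal ((N : ℝ) ^ 2 * c) * ENNReal.ofReal Sw
        ≤ ENNReal.ofReal ((N : ℝ) ^ 2 * c) * (((N : ℝ≥0∞) + 1) * T) :=
          mul_le_mul_right hSwT _
      _ = ENNReal.ofReal K * T := by
          rw [hK, ENNReal.ofReal_mul (mul_nonneg (sq_nonneg _) hc0)]
          have : ENNReal.ofReal ((N : ℝ) + 1) = (N : ℝ≥0∞) + 1 := by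
            rw [ENNReal.ofReal_add (Nat.cast_nonneg N) zero_le_one]
            simp [ENNReal.ofReal_natCast]
          rw [this]
          ring
  -- exponent facts
  set θ : ℝ := α / (1 + α) with hθ
  have hθpos : 0 < θ := div_pos hα (by linarith)
  have hθ1 : θ ≤ 1 := by
    rw [hθ, div_le_one (by linarith)]
    linarith
  rcases le_total T 1 with hT1 | hT1
  · -- T ≤ 1 : T ≤ T ^ θ
    have h5 : T ≤ T ^ θ := by
      calc T = T ^ (1 : ℝ) := (ENNReal.rpow_one T).symm
        _ ≤ T ^ θ := ENNReal.rpow_le_rpow_of_exponent_ge hT1 hθ1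
    calc WassersteinN 2 f g ^ 2 ≤ ENNReal.ofReal K * T := hKT
      _ ≤ ENNReal.ofReal (K + 2 * (N : ℝ) ^ 2 + 1) * T ^ θ :=
        mul_le_mul' (ENNReal.ofReal_le_ofReal (by nlinarith [sq_nonneg (N : ℝ)])) h5
  · -- 1 ≤ T : 1 ≤ T ^ θ
    have h5 : (1 : ℝ≥0∞) ≤ T ^ θ := by
      calc (1 : ℝ≥0∞) = T ^ (0 : ℝ) := by simp
        _ ≤ T ^ θ := ENNReal.rpow_le_rpow_of_exponent_le hT1 hθpos.le
    calc WassersteinN 2 f g ^ 2 ≤ ENNReal.ofReal (2 * (N : ℝ) ^ 2) := hW2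
      _ ≤ ENNReal.ofReal (K + 2 * (N : ℝ) ^ 2 + 1) :=
        ENNReal.ofReal_le_ofReal (by nlinarith)
      _ = ENNReal.ofReal (K + 2 * (N : ℝ) ^ 2 + 1) * 1 := (mul_one _).symm
      _ ≤ ENNReal.ofReal (K + 2 * (N : ℝ) ^ 2 + 1) * T ^ θ := mul_le_mul_right h5 _


end
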